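/- Let n, d be positive integers, let σ : {0,1}^n → Matrix (Fin d) (Fin d) ℂ assign a density matrix (a quantum encoding) to every n-bit string, and for each index i ∈ {1,…,n} let E_i be a positive semidefinite d×d matrix with E_i ≤ I (a two-outcome measurement for recovering the i-th bit). Suppose that for some 0 ≤ ε ≤ 1/2 the average success probability is at least 1 − ε, i.e., (1/(n·2^n))·∑_{x ∈ {0,1}^n} ∑_{i=1}^{n} s(x,i) ≥ 1 − ε, where s(x,i) = Re Tr(E_i·σ_x) if x_i = 1 and s(x,i) = 1 − Re Tr(E_i·σ_x) if x_i = 0. Then log₂ d ≥ (1 − H(ε))·n. (Average-case lower bound for quantum random access codes: a one-message quantum protocol for the index function requires (1−H(ε))n qubits.) -/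

import Mathlib

open Matrix BigOperators Kronecker
open scoped ComplexOrder

noncomputable section
open Classical

/-- The positive semidefinite square root of a matrix (junk value `0` if not PSD). -/
def msqrt {d : Type*} [Fintype d] [DecidableEq d] (A : Matrix d d ℂ) : Matrix d d ℂ :=
  if h : A.PosSemidef then
    (h.1.eigenvectorUnitary : Matrix d d ℂ) *
      diagonal (fun i => ((Real.sqrt (h.1.eigenvalues i) : ℝ) : ℂ)) *
      (star h.1.eigenvectorUnitary : Matrix d d ℂ)
  else 0

/-- The trace norm `Tr √(AᴴA)` of a complex matrix. -/
def traceNorm {d : Type*} [Fintype d] [DecidableEq d] (A : Matrix d d ℂ) : ℝ :=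
  ((msqrt (Aᴴ * A)).trace).re

/-- `ρ` is a density matrix: positive semidefinite with trace `1`. -/
def IsDensityMatrix {d : Type*} [Fintype d] [DecidableEq d] (ρ : Matrix d d ℂ) : Prop :=
  ρ.PosSemidef ∧ ρ.trace = 1

/-- Von Neumann entropy, base 2 (junk value `0` if not Hermitian). -/
def vnEntropy {d : Type*} [Fintype d] [DecidableEq d] (ρ : Matrix d d ℂ) : ℝ :=
  if h : ρ.IsHermitian then -∑ i, (h.eigenvalues i) * Real.logb 2 (h.eigenvalues i) else 0

/-- The binary entropy function, base 2. -/
def binEntropy (p : ℝ) : ℝ := -p * Real.logb 2 p - (1 - p) * Real.logb 2 (1 - p)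

/-- Fidelity of two matrices: `(Tr √(√ρ₁ ρ₂ √ρ₁))²`. -/
def fidelity {d : Type*} [Fintype d] [DecidableEq d] (ρ₁ ρ₂ : Matrix d d ℂ) : ℝ :=
  (((msqrt (msqrt ρ₁ * ρ₂ * msqrt ρ₁)).trace).re) ^ 2

/-- Partial trace over the second tensor factor. -/
def ptraceSnd {m k : ℕ} (ρ : Matrix (Fin m × Fin k) (Fin m × Fin k) ℂ) :
    Matrix (Fin m) (Fin m) ℂ :=
  Matrix.of fun i j => ∑ l : Fin k, ρ (i, l) (j, l)

end



set_option linter.unusedSectionVars false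
set_option maxHeartbeats 1000000

noncomputable section
open Classical


variable {ι : Type*} [Fintype ι] [DecidableEq ι]

open scoped MatrixOrder in
lemma psd_sqrt_aux {X : Matrix ι ι ℂ} (hX : X.PosSemidef) :
    ∃ S : Matrix ι ι ℂ, S.PosSemidef ∧ S * S = X :=
  ⟨CFC.sqrt X, (CFC.sqrt_nonneg X).posSemidef, CFC.sqrt_mul_sqrt_self X hX.nonneg⟩

lemma psd_diag_re_nonneg {X : Matrix ι ι ℂ} (hX : X.PosSemidef) (i : ι) :
    0 ≤ (X i i).re := by
  have h := hX.diag_nonneg (i := i)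
  exact (Complex.le_def.mp h).1

lemma psd_trace_re_nonneg {X : Matrix ι ι ℂ} (hX : X.PosSemidef) :
    0 ≤ X.trace.re := by
  rw [Matrix.trace, Complex.re_sum]
  exact Finset.sum_nonneg fun i _ => psd_diag_re_nonneg hX i

lemma psd_mul_trace_re_nonneg {X Y : Matrix ι ι ℂ} (hX : X.PosSemidef) (hY : Y.PosSemidef) :
    0 ≤ ((X * Y).trace).re := by
  obtain ⟨S, hs, hSS⟩ := psd_sqrt_aux hX
  have h1 : X * Y = S * (S * Y) := by rw [← mul_assoc, hSS]
  rw [h1, Matrix.trace_mul_comm, mul_assoc]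
  have h3 : (S * (Y * S)) = (S)ᴴ * Y * S := by
    rw [← mul_assoc]; nth_rewrite 1 [← hs.1]; rfl
  rw [h3]
  exact psd_trace_re_nonneg (hY.conjTranspose_mul_mul_same S)

/-- Contraction: if `AᴴA ≤ 1` then conjugation by `A` decreases the trace of a PSD matrix. -/
lemma contraction_trace_le {A X : Matrix ι ι ℂ} (hX : X.PosSemidef)
    (hA : ((1 : Matrix ι ι ℂ) - Aᴴ * A).PosSemidef) :
    ((A * X * Aᴴ).trace).re ≤ X.trace.re := by
  have h1 : (A * X * Aᴴ).trace = (X * (Aᴴ * A)).trace := by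
    rw [Matrix.trace_mul_cycle]; rw [Matrix.trace_mul_comm, ← mul_assoc]
  have h2 : X.trace - (A * X * Aᴴ).trace = (X * (1 - Aᴴ * A)).trace := by
    rw [Matrix.mul_sub, Matrix.trace_sub, mul_one, h1]
  have h3 : 0 ≤ ((X * (1 - Aᴴ * A)).trace).re := psd_mul_trace_re_nonneg hX hA
  rw [← h2, Complex.sub_re] at h3
  linarith

/-- The trace of `W Wᴴ` for a word `W` of contractions is at most the dimension. -/
lemma word_gram_trace_le (L : List (Matrix ι ι ℂ))
    (hL : ∀ A ∈ L, ((1 : Matrix ι ι ℂ) - Aᴴ * A).PosSemidef) :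
    ((L.prod * (L.prod)ᴴ).trace).re ≤ (Fintype.card ι : ℝ) := by
  induction L with
  | nil => simp
  | cons A L ih =>
      have hA := hL A List.mem_cons_self
      have hrest : ∀ B ∈ L, ((1 : Matrix ι ι ℂ) - Bᴴ * B).PosSemidef :=
        fun B hB => hL B (List.mem_cons_of_mem A hB)
      have hW : (L.prod * (L.prod)ᴴ).PosSemidef := Matrix.posSemidef_self_mul_conjTranspose _
      have heq : (A :: L).prod * ((A :: L).prod)ᴴ = A * (L.prod * (L.prod)ᴴ) * Aᴴ := by
        rw [List.prod_cons, Matrix.conjTranspose_mul]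
        noncomm_ring
      rw [heq]
      exact le_trans (contraction_trace_le hW hA) (ih hrest)

/-- Cauchy–Schwarz: `Re Tr W ≤ card` given `Re Tr (W Wᴴ) ≤ card`. -/
lemma trace_re_le_card {W : Matrix ι ι ℂ} (h : ((W * Wᴴ).trace).re ≤ (Fintype.card ι : ℝ)) :
    (W.trace).re ≤ (Fintype.card ι : ℝ) := by
  set c : ℝ := (Fintype.card ι : ℝ) with hc
  have hc0 : 0 ≤ c := Nat.cast_nonneg _
  have hgram : ((W * Wᴴ).trace).re = ∑ i, ∑ j, Complex.normSq (W i j) := by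
    rw [Matrix.trace, Complex.re_sum]
    congr 1; ext i
    rw [Matrix.diag_apply, Matrix.mul_apply, Complex.re_sum]
    congr 1; ext j
    rw [Matrix.conjTranspose_apply, Complex.star_def, Complex.mul_conj, Complex.ofReal_re]
  have hdiag : ∑ i, Complex.normSq (W i i) ≤ c := by
    rw [hgram] at h
    refine le_trans (Finset.sum_le_sum fun i _ => ?_) h
    exact Finset.single_le_sum (f := fun j => Complex.normSq (W i j))
      (fun j _ => Complex.normSq_nonneg _) (Finset.mem_univ i)
  have htr : (W.trace).re ≤ ∑ i, ‖W i i‖ := by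
    rw [Matrix.trace, Complex.re_sum]
    exact Finset.sum_le_sum fun i _ => Complex.re_le_norm _
  have hsq : (∑ i, ‖W i i‖) ^ 2 ≤ c * ∑ i, Complex.normSq (W i i) := by
    have := sq_sum_le_card_mul_sum_sq (s := (Finset.univ : Finset ι))
      (f := fun i => ‖W i i‖)
    simp only [Finset.card_univ] at this
    refine le_trans this ?_
    rw [hc]
    gcongr with i
    rw [Complex.normSq_eq_norm_sq, sq]
  have habs : (∑ i, ‖W i i‖) ≤ c := by
    nlinarith [Finset.sum_nonneg (fun i (_ : i ∈ Finset.univ) => norm_nonneg (W i i)),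
      mul_le_mul_of_nonneg_left hdiag hc0]
  linarith

/-- `B = 2E - 1` is Hermitian when `E` is PSD. -/
lemma bmat_herm {E : Matrix ι ι ℂ} (hE : E.PosSemidef) :
    ((2 : ℂ) • E - 1).IsHermitian := by
  have h1 : ((2 : ℂ) • E - 1)ᴴ = (2:ℂ) • Eᴴ - 1 := by
    rw [Matrix.conjTranspose_sub, Matrix.conjTranspose_smul, Matrix.conjTranspose_one]
    norm_num
  rw [Matrix.IsHermitian, h1, hE.1.eq]

lemma bmat_contraction {E : Matrix ι ι ℂ} (hE : E.PosSemidef)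
    (hE1 : ((1 : Matrix ι ι ℂ) - E).PosSemidef) :
    ((1 : Matrix ι ι ℂ) - ((2 : ℂ) • E - 1)ᴴ * ((2 : ℂ) • E - 1)).PosSemidef := by
  have hB := bmat_herm hE
  rw [hB.eq]
  obtain ⟨S, hS1, hSS⟩ : ∃ S : Matrix ι ι ℂ, S.IsHermitian ∧ S * S = E :=
    let ⟨S, hs, hSS⟩ := psd_sqrt_aux hE; ⟨S, hs.1, hSS⟩
  subst hSS
  have hkey : (1 : Matrix ι ι ℂ) - ((2 : ℂ) • (S * S) - 1) * ((2 : ℂ) • (S * S) - 1)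
      = ((2:ℂ) • S)ᴴ * (1 - S * S) * ((2:ℂ) • S) := by
    rw [Matrix.conjTranspose_smul, hS1.eq]
    rw [two_smul, two_smul]
    have : star (2:ℂ) • S = S + S := by norm_num [two_smul]
    rw [this]
    noncomm_ring
  rw [hkey]
  exact hE1.conjTranspose_mul_mul_same _

/-- Noncommutative expansion of a power of a sum into ordered words. -/
lemma sum_pow_eq_sum_words {R : Type*} [Semiring R] {κ : Type*} [Fintype κ] [DecidableEq κ]
    (f : κ → R) (m : ℕ) :
    (∑ i, f i) ^ m = ∑ W : Fin m → κ, (List.ofFn fun j => f (W j)).prod := by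
  induction m with
  | zero => simp
  | succ m ih =>
      rw [pow_succ', ih, Finset.mul_sum]
      rw [← Fintype.sum_equiv (Fin.consEquiv fun _ : Fin (m+1) => κ)
        (fun p => (List.ofFn fun j => f ((Fin.cons p.1 p.2 : Fin (m+1) → κ) j)).prod)
        (fun W => (List.ofFn fun j => f (W j)).prod) (fun p => rfl)]
      rw [Fintype.sum_prod_type]
      have hterm : ∀ (i : κ) (W : Fin m → κ),
          (List.ofFn fun j => f ((Fin.cons i W : Fin (m+1) → κ) j)).prod
          = f i * (List.ofFn fun j => f (W j)).prod := by
        intro i W; rw [List.ofFn_succ, List.prod_cons]; simp [Fin.cons]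
      simp_rw [hterm]
      rw [← Finset.mul_sum, Finset.sum_mul_sum]

/-- Pulling scalars out of an ordered product. -/
lemma ofFn_smul_prod {m : ℕ} (c : Fin m → ℂ) (A : Fin m → Matrix ι ι ℂ) :
    (List.ofFn fun j => c j • A j).prod = (∏ j, c j) • (List.ofFn fun j => A j).prod := by
  induction m with
  | zero => simp
  | succ m ih =>
      rw [List.ofFn_succ, List.ofFn_succ, List.prod_cons, List.prod_cons,
        ih (fun j => c j.succ) (fun j => A j.succ), Fin.prod_univ_succ]
      rw [smul_mul_smul_comm]

/-- The average over sign patterns of a word of signs is nonnegative. -/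
lemma sign_word_sum_nonneg (n m : ℕ) (W : Fin m → Fin n) :
    0 ≤ ∑ x : Fin n → Bool, ∏ j : Fin m, (if x (W j) then (1:ℝ) else -1) := by
  have hfib : ∀ x : Fin n → Bool,
      (∏ j : Fin m, (if x (W j) then (1:ℝ) else -1))
      = ∏ i : Fin n, (if x i then (1:ℝ) else -1) ^ (Finset.univ.filter (fun j => W j = i)).card := by
    intro x
    rw [← Finset.prod_fiberwise_of_maps_to (g := W) (t := Finset.univ)
      (fun j _ => Finset.mem_univ _) (fun j => if x (W j) then (1:ℝ) else -1)]
    refine Finset.prod_congr rfl fun i _ => ?_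
    have hcon : ∀ j ∈ Finset.univ.filter (fun j => W j = i),
        (if x (W j) then (1:ℝ) else -1) = (if x i then (1:ℝ) else -1) := by
      intro j hj; rw [(Finset.mem_filter.mp hj).2]
    rw [Finset.prod_congr rfl hcon, Finset.prod_const]
  simp_rw [hfib]
  have hswap : (∏ i : Fin n, ∑ b : Bool,
        (if b then (1:ℝ) else -1) ^ (Finset.univ.filter (fun j => W j = i)).card)
      = ∑ x : Fin n → Bool, ∏ i : Fin n,
        (if x i then (1:ℝ) else -1) ^ (Finset.univ.filter (fun j => W j = i)).card := by
    rw [Finset.prod_univ_sum, Fintype.piFinset_univ]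
  rw [← hswap]
  refine Finset.prod_nonneg fun i _ => ?_
  rw [Fintype.sum_bool]
  simp only [if_true, if_false, one_pow]
  rcases neg_one_pow_eq_or ℝ ((Finset.univ.filter (fun j => W j = i)).card) with h | h <;>
    simp only [Bool.false_eq_true, if_false] <;> rw [h] <;> norm_num

lemma conj_pow_unitary (U D : Matrix ι ι ℂ) (hU : Uᴴ * U = 1) (m : ℕ) :
    (U * D * Uᴴ) ^ m = U * D ^ m * Uᴴ := by
  induction m with
  | zero =>
      rw [pow_zero, pow_zero, mul_one]
      exact (mul_eq_one_comm.mp hU).symm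
  | succ m ih =>
      rw [pow_succ, ih, pow_succ]
      calc U * D ^ m * Uᴴ * (U * D * Uᴴ) = U * D ^ m * (Uᴴ * U) * D * Uᴴ := by noncomm_ring
      _ = U * (D ^ m * D) * Uᴴ := by rw [hU]; noncomm_ring

lemma real_exp_tsum (x : ℝ) : Real.exp x = ∑' m : ℕ, x ^ m / m.factorial := by
  rw [Real.exp_eq_exp_ℝ, NormedSpace.exp_eq_tsum_div]

variable {M X : Matrix ι ι ℂ}

lemma herm_trace_pow (hM : M.IsHermitian) (m : ℕ) :
    ((M ^ m).trace).re = ∑ k, (hM.eigenvalues k) ^ m := by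
  set U : Matrix ι ι ℂ := (Matrix.IsHermitian.eigenvectorUnitary hM : Matrix ι ι ℂ) with hUdef
  have hU : Uᴴ * U = 1 := by
    rw [← Matrix.star_eq_conjTranspose]
    exact (Unitary.mem_iff.mp (Matrix.IsHermitian.eigenvectorUnitary hM).2).1
  have hspec : M = U * Matrix.diagonal (RCLike.ofReal ∘ hM.eigenvalues) * Uᴴ := by
    rw [← Matrix.star_eq_conjTranspose]
    exact hM.spectral_theorem
  conv_lhs => rw [hspec]
  rw [conj_pow_unitary U _ hU, Matrix.trace_mul_cycle, hU, one_mul,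
    Matrix.diagonal_pow, Matrix.trace_diagonal, Complex.re_sum]
  refine Finset.sum_congr rfl fun k _ => ?_
  simp [← Complex.ofReal_pow]

lemma herm_exp_trace_bound (hM : M.IsHermitian) (hX : X.PosSemidef) (hX1 : X.trace = 1) (t : ℝ) :
    Real.exp (t * ((M * X).trace).re) ≤ ∑ k, Real.exp (t * hM.eigenvalues k) := by
  set U : Matrix ι ι ℂ := (Matrix.IsHermitian.eigenvectorUnitary hM : Matrix ι ι ℂ) with hUdef
  have hU : Uᴴ * U = 1 := by
    rw [← Matrix.star_eq_conjTranspose]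
    exact (Unitary.mem_iff.mp (Matrix.IsHermitian.eigenvectorUnitary hM).2).1
  have hU' : U * Uᴴ = 1 := mul_eq_one_comm.mp hU
  have hspec : M = U * Matrix.diagonal (RCLike.ofReal ∘ hM.eigenvalues) * Uᴴ := by
    rw [← Matrix.star_eq_conjTranspose]
    exact hM.spectral_theorem
  set P : Matrix ι ι ℂ := Uᴴ * X * U with hPdef
  have hP : P.PosSemidef := by
    have := hX.conjTranspose_mul_mul_same (B := U)
    simpa [hPdef] using this
  have hPtr : P.trace = 1 := by
    rw [hPdef, Matrix.trace_mul_cycle, hU', one_mul, hX1]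
  set p : ι → ℝ := fun k => (P k k).re with hpdef
  have hp0 : ∀ k, 0 ≤ p k := fun k => psd_diag_re_nonneg hP k
  have hp1 : ∑ k, p k = 1 := by
    have : P.trace.re = 1 := by rw [hPtr]; simp
    rw [← this, Matrix.trace, Complex.re_sum]
    rfl
  have hple : ∀ k, p k ≤ 1 := by
    intro k
    rw [← hp1]
    exact Finset.single_le_sum (fun j _ => hp0 j) (Finset.mem_univ k)
  have htr : ((M * X).trace).re = ∑ k, hM.eigenvalues k * p k := by
    conv_lhs => rw [hspec]
    have h1 : U * Matrix.diagonal (RCLike.ofReal ∘ hM.eigenvalues) * Uᴴ * X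
        = U * (Matrix.diagonal (RCLike.ofReal ∘ hM.eigenvalues) * Uᴴ * X) := by
      noncomm_ring
    rw [h1, Matrix.trace_mul_comm]
    have h1b : Matrix.diagonal (RCLike.ofReal ∘ hM.eigenvalues) * Uᴴ * X * U
        = Matrix.diagonal (RCLike.ofReal ∘ hM.eigenvalues) * P := by
      rw [hPdef]; noncomm_ring
    rw [h1b]
    have h2 : (Matrix.diagonal (RCLike.ofReal ∘ hM.eigenvalues) * P).trace
        = ∑ k, (RCLike.ofReal (hM.eigenvalues k) : ℂ) * P k k := by
      rw [Matrix.trace]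
      simp only [Matrix.diag_apply, Matrix.mul_apply, Matrix.diagonal_apply, ite_mul, zero_mul,
        Finset.sum_ite_eq, Finset.mem_univ, if_true]
      rfl
    rw [h2, Complex.re_sum]
    refine Finset.sum_congr rfl fun k _ => ?_
    simp [Complex.re_ofReal_mul, hpdef]
  rw [htr]
  have hjensen : Real.exp (∑ k, p k • (t * hM.eigenvalues k))
      ≤ ∑ k, p k • Real.exp (t * hM.eigenvalues k) := by
    refine convexOn_exp.map_sum_le (fun k _ => hp0 k) hp1 (fun k _ => Set.mem_univ _)
  have harg : t * ∑ k, hM.eigenvalues k * p k = ∑ k, p k • (t * hM.eigenvalues k) := by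
    rw [Finset.mul_sum]
    refine Finset.sum_congr rfl fun k _ => ?_
    simp [smul_eq_mul]; ring
  rw [harg]
  refine le_trans hjensen ?_
  refine Finset.sum_le_sum fun k _ => ?_
  have := Real.exp_pos (t * hM.eigenvalues k)
  calc p k • Real.exp (t * hM.eigenvalues k) ≤ 1 * Real.exp (t * hM.eigenvalues k) := by
        rw [smul_eq_mul]
        exact mul_le_mul_of_nonneg_right (hple k) (le_of_lt this)
  _ = Real.exp (t * hM.eigenvalues k) := one_mul _

lemma herm_summable (hM : M.IsHermitian) (t : ℝ) :
    Summable (fun m : ℕ => t ^ m / m.factorial * ((M ^ m).trace).re) := by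
  have : (fun m : ℕ => t ^ m / m.factorial * ((M ^ m).trace).re)
      = fun m => ∑ k, (t * hM.eigenvalues k) ^ m / m.factorial := by
    funext m
    rw [herm_trace_pow hM, Finset.mul_sum]
    refine Finset.sum_congr rfl fun k _ => ?_
    rw [mul_pow]
    ring
  rw [this]
  exact (hasSum_sum fun k _ => (Real.summable_pow_div_factorial
    (t * hM.eigenvalues k)).hasSum).summable

lemma herm_tsum_eq (hM : M.IsHermitian) (t : ℝ) :
    ∑' m : ℕ, t ^ m / m.factorial * ((M ^ m).trace).re
      = ∑ k, Real.exp (t * hM.eigenvalues k) := by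
  have h : ∀ m : ℕ, t ^ m / m.factorial * ((M ^ m).trace).re
      = ∑ k, (t * hM.eigenvalues k) ^ m / m.factorial := by
    intro m
    rw [herm_trace_pow hM, Finset.mul_sum]
    refine Finset.sum_congr rfl fun k _ => ?_
    rw [mul_pow]; ring
  simp_rw [h]
  rw [Summable.tsum_finsetSum (fun k _ => Real.summable_pow_div_factorial _)]
  exact Finset.sum_congr rfl fun k _ => (real_exp_tsum _).symm

end

/-- **Average-case lower bound for quantum random access codes.** If an encoding of
`n`-bit strings into density matrices on `ℂ^d` admits, for each index `i`, a
two-outcome measurement recovering the `i`-th bit with average success probability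
at least `1 - ε`, then `log₂ d ≥ (1 - H(ε)) n`. -/
theorem random_access_code_bound (n d : ℕ) (hn : 0 < n) (hd : 0 < d)
    (σ : (Fin n → Bool) → Matrix (Fin d) (Fin d) ℂ)
    (hσ : ∀ x, IsDensityMatrix (σ x))
    (E : Fin n → Matrix (Fin d) (Fin d) ℂ) (hE : ∀ i, (E i).PosSemidef)
    (hE1 : ∀ i, ((1 : Matrix (Fin d) (Fin d) ℂ) - E i).PosSemidef)
    (ε : ℝ) (hε0 : 0 ≤ ε) (hε : ε ≤ 1 / 2)
    (hsucc : (1 : ℝ) / (n * 2 ^ n) * ∑ x : Fin n → Bool, ∑ i : Fin n,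
        (if x i then ((E i * σ x).trace).re else 1 - ((E i * σ x).trace).re) ≥
      1 - ε) :
    Real.logb 2 d ≥ (1 - binEntropy ε) * n := by
  classical
  set B : Fin n → Matrix (Fin d) (Fin d) ℂ := fun i => (2:ℂ) • E i - 1 with hBdef
  set sg : (Fin n → Bool) → Fin n → ℝ := fun x i => if x i then 1 else -1 with hsgdef
  set Mx : (Fin n → Bool) → Matrix (Fin d) (Fin d) ℂ :=
    fun x => ∑ i, ((sg x i : ℝ) : ℂ) • B i with hMxdef
  set a : (Fin n → Bool) → Fin n → ℝ := fun x i => ((E i * σ x).trace).re with hadef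
  set r : (Fin n → Bool) → ℝ := fun x => ((Mx x * σ x).trace).re with hrdef
  have hBh : ∀ i, (B i).IsHermitian := fun i => bmat_herm (hE i)
  have hBc : ∀ i, ((1 : Matrix (Fin d) (Fin d) ℂ) - (B i)ᴴ * B i).PosSemidef :=
    fun i => bmat_contraction (hE i) (hE1 i)
  have hMh : ∀ x, (Mx x).IsHermitian := by
    intro x
    rw [Matrix.IsHermitian, hMxdef, Matrix.conjTranspose_sum]
    refine Finset.sum_congr rfl fun i _ => ?_
    rw [Matrix.conjTranspose_smul, (hBh i).eq, Complex.star_def, Complex.conj_ofReal]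
  -- step A : success probability gives a lower bound on ∑ r x
  have hBtr : ∀ x i, ((B i * σ x).trace).re = 2 * a x i - 1 := by
    intro x i
    have h1 : B i * σ x = (2:ℂ) • (E i * σ x) - σ x := by
      rw [hBdef]
      simp only [Matrix.sub_mul, Matrix.smul_mul, Matrix.one_mul]
    rw [h1, Matrix.trace_sub, Matrix.trace_smul, (hσ x).2]
    simp only [smul_eq_mul, Complex.sub_re, Complex.one_re]
    have : ((2:ℂ) * (E i * σ x).trace).re = 2 * a x i := by
      have h2 : (2:ℂ) = ((2:ℝ):ℂ) := by norm_num
      rw [h2, Complex.re_ofReal_mul, hadef]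
    rw [this]
  have hr : ∀ x, r x = ∑ i, sg x i * (2 * a x i - 1) := by
    intro x
    show ((Mx x * σ x).trace).re = ∑ i, sg x i * (2 * a x i - 1)
    have h1 : Mx x * σ x = ∑ i, ((sg x i : ℝ):ℂ) • (B i * σ x) := by
      rw [hMxdef, Finset.sum_mul]
      exact Finset.sum_congr rfl fun i _ => Matrix.smul_mul _ _ _
    rw [h1, Matrix.trace_sum, Complex.re_sum]
    refine Finset.sum_congr rfl fun i _ => ?_
    rw [Matrix.trace_smul, smul_eq_mul, Complex.re_ofReal_mul, hBtr x i]
  have hA : (n : ℝ) * 2^n * (1 - 2*ε) ≤ ∑ x, r x := by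
    have hterm : ∀ x i, (if x i then a x i else 1 - a x i)
        = 1/2 + (1/2) * (sg x i * (2 * a x i - 1)) := by
      intro x i
      rw [hsgdef]
      by_cases h : x i <;> simp [h] <;> ring
    have hsumx : ∀ x, (∑ i, (if x i then a x i else 1 - a x i)) = n/2 + r x / 2 := by
      intro x
      simp_rw [hterm x]
      rw [Finset.sum_add_distrib, Finset.sum_const, Finset.card_univ, Fintype.card_fin,
        ← Finset.mul_sum, ← hr x]
      push_cast
      ring
    have hN : (0:ℝ) < (n : ℝ) * 2^n := by positivity
    have htot : (1 - ε) * ((n:ℝ) * 2^n) ≤ ∑ x : Fin n → Bool, (n/2 + r x / 2) := by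
      have := hsucc
      rw [ge_iff_le, div_mul_eq_mul_div, le_div_iff₀ hN, one_mul] at this
      calc (1 - ε) * ((n:ℝ) * 2^n) ≤ ∑ x : Fin n → Bool, ∑ i : Fin n,
            (if x i then a x i else 1 - a x i) := this
        _ = ∑ x : Fin n → Bool, (n/2 + r x / 2) :=
            Finset.sum_congr rfl fun x _ => hsumx x
    rw [Finset.sum_add_distrib, Finset.sum_const, Finset.card_univ] at htot
    have hcard : (Fintype.card (Fin n → Bool) : ℝ) = 2^n := by
      rw [Fintype.card_fun]
      push_cast
      simp
    have hhalf : ∑ x : Fin n → Bool, r x / 2 = (∑ x, r x)/2 := by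
      rw [Finset.sum_div]
    rw [hhalf] at htot
    have : (Fintype.card (Fin n → Bool)) • ((n:ℝ)/2) = 2^n * ((n:ℝ)/2) := by
      rw [nsmul_eq_mul, hcard]
    rw [this] at htot
    nlinarith [htot]
  -- step B : word bound
  have hτ : ∀ (m : ℕ) (W : Fin m → Fin n),
      (((List.ofFn fun j => B (W j)).prod).trace).re ≤ (d:ℝ) := by
    intro m W
    have hmem : ∀ A ∈ (List.ofFn fun j => B (W j)),
        ((1 : Matrix (Fin d) (Fin d) ℂ) - Aᴴ * A).PosSemidef := by
      intro A hA
      obtain ⟨j, rfl⟩ := List.mem_ofFn.mp hA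
      exact hBc _
    have h2 := trace_re_le_card (word_gram_trace_le _ hmem)
    simpa [Fintype.card_fin] using h2
  have hword : ∀ m : ℕ, ∑ x : Fin n → Bool, ((Mx x ^ m).trace).re
      ≤ (d:ℝ) * ∑ x : Fin n → Bool, (∑ i, sg x i)^m := by
    intro m
    have hpow : ∀ x, ((Mx x ^ m).trace).re
        = ∑ W : Fin m → Fin n,
            (∏ j, sg x (W j)) * (((List.ofFn fun j => B (W j)).prod).trace).re := by
      intro x
      have h1 : Mx x ^ m = ∑ W : Fin m → Fin n,
          (∏ j, ((sg x (W j) : ℝ) : ℂ)) • (List.ofFn fun j => B (W j)).prod := by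
        show (∑ i, ((sg x i : ℝ):ℂ) • B i) ^ m = _
        rw [sum_pow_eq_sum_words (fun i => ((sg x i : ℝ):ℂ) • B i) m]
        exact Finset.sum_congr rfl fun W _ => ofFn_smul_prod _ _
      rw [h1, Matrix.trace_sum, Complex.re_sum]
      refine Finset.sum_congr rfl fun W _ => ?_
      rw [Matrix.trace_smul]
      have h3 : (∏ j, ((sg x (W j) : ℝ):ℂ)) = (((∏ j, sg x (W j) : ℝ)):ℂ) := by
        push_cast; rfl
      rw [h3, smul_eq_mul, Complex.re_ofReal_mul]
    have hRpow : ∀ x : Fin n → Bool, (∑ i, sg x i)^m = ∑ W : Fin m → Fin n, ∏ j, sg x (W j) := by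
      intro x
      rw [sum_pow_eq_sum_words (fun i => sg x i) m]
      exact Finset.sum_congr rfl fun W _ => List.prod_ofFn
    calc ∑ x : Fin n → Bool, ((Mx x ^ m).trace).re
        = ∑ W : Fin m → Fin n,
            (∑ x : Fin n → Bool, ∏ j, sg x (W j))
              * (((List.ofFn fun j => B (W j)).prod).trace).re := by
          simp_rw [hpow]
          rw [Finset.sum_comm]
          exact Finset.sum_congr rfl fun W _ => (Finset.sum_mul _ _ _).symm
      _ ≤ ∑ W : Fin m → Fin n, (∑ x : Fin n → Bool, ∏ j, sg x (W j)) * (d:ℝ) := by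
          refine Finset.sum_le_sum fun W _ => ?_
          have hσW : 0 ≤ ∑ x : Fin n → Bool, ∏ j, sg x (W j) := by
            have h4 := sign_word_sum_nonneg n m W
            simpa [hsgdef] using h4
          exact mul_le_mul_of_nonneg_left (hτ m W) hσW
      _ = (d:ℝ) * ∑ x : Fin n → Bool, (∑ i, sg x i)^m := by
          simp_rw [hRpow]
          simp_rw [Finset.sum_mul, Finset.mul_sum]
          rw [Finset.sum_comm]
          exact Finset.sum_congr rfl fun x _ => Finset.sum_congr rfl fun W _ => mul_comm _ _
  -- step C : key exponential-moment inequality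
  have hkey : ∀ t : ℝ, 0 ≤ t →
      Real.exp (t * ((n:ℝ) * (1 - 2*ε))) * 2^n ≤ (d:ℝ) * (Real.exp t + Real.exp (-t))^n := by
    intro t ht
    set N : ℝ := 2^n with hNdef
    have hN0 : (0:ℝ) < N := by positivity
    have hcardx : (Fintype.card (Fin n → Bool) : ℝ) = N := by
      rw [Fintype.card_fun]; push_cast; simp [hNdef]
    have hjensen : Real.exp (t * (∑ x, r x) / N) * N
        ≤ ∑ x : Fin n → Bool, Real.exp (t * r x) := by
      have hw : ∑ _x : Fin n → Bool, (1/N) = 1 := by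
        rw [Finset.sum_const, Finset.card_univ, nsmul_eq_mul, hcardx]; field_simp
      have hj := convexOn_exp.map_sum_le (t := Finset.univ)
        (w := fun _ : (Fin n → Bool) => (1/N)) (p := fun x => t * r x)
        (fun x _ => by positivity) hw (fun x _ => Set.mem_univ _)
      have harg : ∑ x : Fin n → Bool, (1/N) • (t * r x) = t * (∑ x, r x) / N := by
        simp_rw [smul_eq_mul]
        rw [← Finset.mul_sum, ← Finset.mul_sum]
        field_simp
      have hj2 : Real.exp (t * (∑ x, r x) / N)
          ≤ (1/N) * ∑ x : Fin n → Bool, Real.exp (t * r x) := by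
        rw [← harg]
        exact le_trans hj (le_of_eq (by simp_rw [smul_eq_mul]; rw [← Finset.mul_sum]))
      have h11 := mul_le_mul_of_nonneg_right hj2 (le_of_lt hN0)
      calc Real.exp (t * (∑ x, r x) / N) * N
          ≤ ((1/N) * ∑ x : Fin n → Bool, Real.exp (t * r x)) * N := h11
        _ = ∑ x : Fin n → Bool, Real.exp (t * r x) := by field_simp
    have hchain : ∑ x : Fin n → Bool, Real.exp (t * r x)
        ≤ (d:ℝ) * ∑ x : Fin n → Bool, Real.exp (t * ∑ i, sg x i) := by
      have hx1 : ∀ x, Real.exp (t * r x)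
          ≤ ∑' m : ℕ, t^m / m.factorial * ((Mx x ^ m).trace).re := by
        intro x
        rw [herm_tsum_eq (hMh x) t]
        exact herm_exp_trace_bound (hMh x) (hσ x).1 (hσ x).2 t
      have hsum1 : Summable (fun m : ℕ =>
          ∑ x : Fin n → Bool, t^m / m.factorial * ((Mx x ^ m).trace).re) :=
        (hasSum_sum fun x _ => (herm_summable (hMh x) t).hasSum).summable
      have hRs : ∀ x : Fin n → Bool,
          Summable (fun m : ℕ => (d:ℝ) * ((t * ∑ i, sg x i)^m / m.factorial)) :=
        fun x => (Real.summable_pow_div_factorial _).mul_left _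
      have hsum2 : Summable (fun m : ℕ =>
          ∑ x : Fin n → Bool, (d:ℝ) * ((t * ∑ i, sg x i)^m / m.factorial)) :=
        (hasSum_sum fun x _ => (hRs x).hasSum).summable
      calc ∑ x : Fin n → Bool, Real.exp (t * r x)
          ≤ ∑ x : Fin n → Bool, ∑' m : ℕ, t^m / m.factorial * ((Mx x ^ m).trace).re :=
            Finset.sum_le_sum fun x _ => hx1 x
        _ = ∑' m : ℕ, ∑ x : Fin n → Bool, t^m / m.factorial * ((Mx x ^ m).trace).re :=
            (Summable.tsum_finsetSum fun x _ => herm_summable (hMh x) t).symm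
        _ ≤ ∑' m : ℕ, ∑ x : Fin n → Bool, (d:ℝ) * ((t * ∑ i, sg x i)^m / m.factorial) := by
            refine Summable.tsum_le_tsum ?_ hsum1 hsum2
            intro m
            have h5 : ∑ x : Fin n → Bool, t^m/(m.factorial:ℝ) * ((Mx x ^m).trace).re
                = t^m/(m.factorial:ℝ) * ∑ x : Fin n → Bool, ((Mx x ^m).trace).re := by
              rw [Finset.mul_sum]
            have h6 : ∑ x : Fin n → Bool, (d:ℝ) * ((t * ∑ i, sg x i)^m / m.factorial)
                = t^m/(m.factorial:ℝ) * ((d:ℝ) * ∑ x : Fin n → Bool, (∑ i, sg x i)^m) := by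
              have hmul : ∀ x : Fin n → Bool, (d:ℝ) * ((t * ∑ i, sg x i)^m / m.factorial)
                  = t^m/(m.factorial:ℝ) * ((d:ℝ) * (∑ i, sg x i)^m) := by
                intro x; rw [mul_pow]; ring
              simp_rw [hmul]
              rw [Finset.mul_sum, Finset.mul_sum]
            rw [h5, h6]
            have ht' : (0:ℝ) ≤ t^m/(m.factorial:ℝ) := by positivity
            exact mul_le_mul_of_nonneg_left (hword m) ht'
        _ = ∑ x : Fin n → Bool, ∑' m : ℕ, (d:ℝ) * ((t * ∑ i, sg x i)^m / m.factorial) :=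
            Summable.tsum_finsetSum fun x _ => hRs x
        _ = (d:ℝ) * ∑ x : Fin n → Bool, Real.exp (t * ∑ i, sg x i) := by
            rw [Finset.mul_sum]
            refine Finset.sum_congr rfl fun x _ => ?_
            rw [tsum_mul_left, ← real_exp_tsum]
    have hprod : ∑ x : Fin n → Bool, Real.exp (t * ∑ i, sg x i)
        = (Real.exp t + Real.exp (-t))^n := by
      have h7 : ∀ x : Fin n → Bool, Real.exp (t * ∑ i, sg x i)
          = ∏ i, Real.exp (t * sg x i) := by
        intro x
        rw [Finset.mul_sum, Real.exp_sum]
      simp_rw [h7]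
      have h8 : (∏ _i : Fin n, ∑ b : Bool, Real.exp (t * (if b then (1:ℝ) else -1)))
          = ∑ x : Fin n → Bool, ∏ i : Fin n, Real.exp (t * (if x i then (1:ℝ) else -1)) := by
        rw [Finset.prod_univ_sum, Fintype.piFinset_univ]
      calc ∑ x : Fin n → Bool, ∏ i, Real.exp (t * sg x i)
          = ∑ x : Fin n → Bool, ∏ i, Real.exp (t * (if x i then (1:ℝ) else -1)) := by
            exact Finset.sum_congr rfl fun x _ => Finset.prod_congr rfl fun i _ => by
              rw [hsgdef]
        _ = ∏ _i : Fin n, ∑ b : Bool, Real.exp (t * (if b then (1:ℝ) else -1)) := h8.symm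
        _ = (Real.exp t + Real.exp (-t))^n := by
            simp only [Fintype.sum_bool, if_true, Bool.false_eq_true, if_false,
              mul_one, mul_neg_one]
            rw [Finset.prod_const, Finset.card_univ, Fintype.card_fin]
    have hmono : Real.exp (t * ((n:ℝ)*(1-2*ε))) ≤ Real.exp (t * (∑ x, r x)/N) := by
      rw [Real.exp_le_exp]
      have h10 : (n:ℝ)*(1-2*ε) ≤ (∑ x, r x)/N := by
        rw [le_div_iff₀ hN0]
        calc (n:ℝ)*(1-2*ε)*N = (n:ℝ)*N*(1-2*ε) := by ring
          _ = (n:ℝ)*2^n*(1-2*ε) := by rw [hNdef]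
          _ ≤ ∑ x, r x := hA
      calc t * ((n:ℝ)*(1-2*ε)) ≤ t * ((∑ x, r x)/N) := mul_le_mul_of_nonneg_left h10 ht
        _ = t * (∑ x, r x)/N := by ring
    calc Real.exp (t * ((n:ℝ)*(1-2*ε))) * N ≤ Real.exp (t*(∑ x, r x)/N) * N :=
          mul_le_mul_of_nonneg_right hmono (le_of_lt hN0)
      _ ≤ ∑ x : Fin n → Bool, Real.exp (t * r x) := hjensen
      _ ≤ (d:ℝ) * ∑ x : Fin n → Bool, Real.exp (t * ∑ i, sg x i) := hchain
      _ = (d:ℝ) * (Real.exp t + Real.exp (-t))^n := by rw [hprod]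
  -- step D : optimize over t
  have hlog2 : (0:ℝ) < Real.log 2 := Real.log_pos (by norm_num)
  rw [ge_iff_le, Real.logb, le_div_iff₀ hlog2]
  by_cases hez : ε = 0
  · subst hez
    have hbe : binEntropy 0 = 0 := by simp [binEntropy]
    rw [hbe]
    have h2n : (2:ℝ)^n ≤ (d:ℝ) := by
      have hf : ∀ t : ℝ, 0 ≤ t → (2 / (1 + Real.exp (-t)^2))^n ≤ (d:ℝ) := by
        intro t ht
        have hk : Real.exp (t*(n:ℝ)) * 2^n ≤ (d:ℝ) * (Real.exp t + Real.exp (-t))^n := by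
          have hthis := hkey t ht
          norm_num at hthis
          exact hthis
        have hprod1 : Real.exp t * Real.exp (-t) = 1 := by
          rw [← Real.exp_add]; simp
        have hq : Real.exp t * (1 + Real.exp (-t)^2) = Real.exp t + Real.exp (-t) := by
          linear_combination Real.exp (-t) * hprod1
        have h1q : (0:ℝ) < 1 + Real.exp (-t)^2 := by positivity
        have hrepr : 2 / (1 + Real.exp (-t)^2)
            = 2 * Real.exp t / (Real.exp t + Real.exp (-t)) := by
          rw [← hq, mul_comm (Real.exp t) (1 + Real.exp (-t)^2), mul_div_mul_right _ _
            (ne_of_gt (Real.exp_pos t))]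
        rw [hrepr, div_pow, div_le_iff₀ (by positivity)]
        calc (2 * Real.exp t)^n = Real.exp (t*(n:ℝ)) * 2^n := by
              rw [mul_pow, mul_comm t (n:ℝ), Real.exp_nat_mul]
              ring
          _ ≤ (d:ℝ) * (Real.exp t + Real.exp (-t))^n := hk
      have hlim : Filter.Tendsto (fun t : ℝ => (2 / (1 + Real.exp (-t)^2))^n)
          Filter.atTop (nhds ((2:ℝ)^n)) := by
        have h0 : Filter.Tendsto (fun t : ℝ => Real.exp (-t)) Filter.atTop (nhds 0) :=
          Real.tendsto_exp_neg_atTop_nhds_zero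
        have h1 : Filter.Tendsto (fun t : ℝ => 1 + Real.exp (-t)^2) Filter.atTop (nhds 1) := by
          have h0' := h0.pow 2
          have hsum := tendsto_const_nhds (x := (1:ℝ)) (f := Filter.atTop (α := ℝ)) |>.add h0'
          simpa using hsum
        have h2 : Filter.Tendsto (fun t : ℝ => 2 / (1 + Real.exp (-t)^2))
            Filter.atTop (nhds 2) := by
          have hdiv := (tendsto_const_nhds (x := (2:ℝ)) (f := Filter.atTop (α := ℝ))).div h1
            (by norm_num)
          simpa using (show Filter.Tendsto (fun t : ℝ => 2 / (1 + Real.exp (-t)^2))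
            Filter.atTop (nhds (2 / 1)) from hdiv)
        exact h2.pow n
      exact le_of_tendsto hlim (Filter.eventually_atTop.mpr ⟨0, fun t ht => hf t ht⟩)
    have hlogd : Real.log ((2:ℝ)^n) ≤ Real.log d := by
      have h2n0 : (0:ℝ) < 2^n := by positivity
      exact Real.log_le_log h2n0 h2n
    rw [Real.log_pow] at hlogd
    calc (1 - 0) * (n:ℝ) * Real.log 2 = (n:ℝ) * Real.log 2 := by ring
      _ ≤ Real.log d := hlogd
  · have hεpos : 0 < ε := lt_of_le_of_ne hε0 (Ne.symm hez)
    have h1ε : (0:ℝ) < 1 - ε := by linarith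
    set u : ℝ := (1-ε)/ε with hudef
    have hu0 : 0 < u := by positivity
    have hu1 : 1 ≤ u := by
      rw [hudef, le_div_iff₀ hεpos]; linarith
    set t0 : ℝ := Real.log u / 2 with ht0def
    have ht0 : 0 ≤ t0 := by
      apply div_nonneg _ (by norm_num)
      exact Real.log_nonneg hu1
    have hk := hkey t0 ht0
    set s : ℝ := Real.exp t0 with hsdef
    have hs0 : 0 < s := Real.exp_pos _
    have hs2 : s^2 = u := by
      rw [hsdef, sq, ← Real.exp_add]
      have h2t0 : t0 + t0 = Real.log u := by rw [ht0def]; ring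
      rw [h2t0, Real.exp_log hu0]
    have hu1' : u + 1 = 1/ε := by rw [hudef]; field_simp; ring
    have hsum : s + s⁻¹ = 1/(ε*s) := by
      have h12 : s + s⁻¹ = (s^2+1)/s := by field_simp
      rw [h12, hs2, hu1']
      field_simp
    have hexpneg : Real.exp (-t0) = s⁻¹ := by rw [Real.exp_neg, hsdef]
    rw [hexpneg, hsum] at hk
    have hlhs : Real.log (Real.exp (t0*((n:ℝ)*(1-2*ε))) * 2^n)
        = t0*((n:ℝ)*(1-2*ε)) + n * Real.log 2 := by
      rw [Real.log_mul (by positivity) (by positivity), Real.log_exp, Real.log_pow]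
    have hrhs : Real.log ((d:ℝ) * (1/(ε*s))^n)
        = Real.log d + n * (-(Real.log ε) - t0) := by
      have hd0 : (0:ℝ) < d := by exact_mod_cast hd
      rw [Real.log_mul (by positivity) (by positivity), Real.log_pow]
      congr 1
      rw [one_div, Real.log_inv, Real.log_mul (ne_of_gt hεpos) (ne_of_gt hs0)]
      rw [hsdef, Real.log_exp]
      ring
    have hlog := Real.log_le_log (by positivity) hk
    rw [hlhs, hrhs] at hlog
    have ht0eq : t0 = (Real.log (1-ε) - Real.log ε)/2 := by
      rw [ht0def, hudef, Real.log_div (ne_of_gt h1ε) (ne_of_gt hεpos)]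
    rw [ht0eq] at hlog
    have hids : (1 - binEntropy ε) * Real.log 2
        = Real.log 2 + ε * Real.log ε + (1-ε)*Real.log (1-ε) := by
      rw [binEntropy, Real.logb, Real.logb]
      field_simp
      ring
    have hgoal' : (1 - binEntropy ε) * (n:ℝ) * Real.log 2
        = (n:ℝ) * ((1 - binEntropy ε) * Real.log 2) := by ring
    rw [hgoal', hids]
    have hlin : (n:ℝ) * (Real.log 2 + ε * Real.log ε + (1-ε)*Real.log (1-ε))
        = ((Real.log (1-ε) - Real.log ε)/2)*((n:ℝ)*(1-2*ε)) + (n:ℝ) * Real.log 2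
          - (n:ℝ) * (-(Real.log ε) - (Real.log (1-ε) - Real.log ε)/2) := by ring
    linarith [hlog]
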